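/- Let N∇(n₁,n₂,r,s) denote the number of pairs (u,v) ∈ ∇_{n₁,r} × ∇_{n₂,r} with D(u,v) = s, with the convention N∇(n₁,n₂,r,s) = 0 whenever any of the arguments is negative. Then for all integers n₁, n₂, s ≥ 0 and r ≥ 1: N∇(n₁,n₂,r,s) = Σ_{i≥1} N∇(n₁−i, n₂−i, r−1, s−|n₂−n₁|) + Σ_{i≥1} Σ_{j≥1} N∇(n₁−i, n₂−i−j, r−1, s−|n₁−n₂+j|) + Σ_{i≥1} Σ_{j≥1} N∇(n₁−i−j, n₂−i, r−1, s−|n₁−n₂−j|), where all sums are finite because all but finitely many terms vanish. -/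

import Mathlib

/-- `nablaPairCount n₁ n₂ r s` is the number of pairs `(u,v) ∈ ∇_{n₁,r} × ∇_{n₂,r}`
(inverted simplices, i.e. strictly increasing vectors with entries in `[1,n]`) with
L1-distance `D(u,v) = s`, with the convention that the count is `0` whenever any of
`n₁, n₂, s` is negative. -/
noncomputable def nablaPairCount (n₁ n₂ : ℤ) (r : ℕ) (s : ℤ) : ℕ :=
  if 0 ≤ n₁ ∧ 0 ≤ n₂ ∧ 0 ≤ s then
    Nat.card {p : (Fin r → ℤ) × (Fin r → ℤ) //
      (∀ i, 1 ≤ p.1 i) ∧ StrictMono p.1 ∧ (∀ i, p.1 i ≤ n₁) ∧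
      (∀ i, 1 ≤ p.2 i) ∧ StrictMono p.2 ∧ (∀ i, p.2 i ≤ n₂) ∧
      (∑ i, |p.1 i - p.2 i|) = s}
  else 0

/-- Recursive characterization of the number of pairs at L1-distance `s` in inverted
simplices.  The sums `Σ_{i ≥ 1}` and `Σ_{j ≥ 1}` are written as `tsum`s over `ℕ`
(summing over `i + 1`, `j + 1`); all but finitely many terms vanish. -/
def NGood (n₁ n₂ : ℤ) (r : ℕ) (s : ℤ) (p : (Fin r → ℤ) × (Fin r → ℤ)) : Prop :=
  (∀ i, 1 ≤ p.1 i) ∧ StrictMono p.1 ∧ (∀ i, p.1 i ≤ n₁) ∧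
  (∀ i, 1 ≤ p.2 i) ∧ StrictMono p.2 ∧ (∀ i, p.2 i ≤ n₂) ∧
  (∑ i, |p.1 i - p.2 i|) = s

lemma npc_pos {n₁ n₂ s : ℤ} (h₁ : 0 ≤ n₁) (h₂ : 0 ≤ n₂) (h₃ : 0 ≤ s) (r : ℕ) :
    nablaPairCount n₁ n₂ r s = Nat.card {p // NGood n₁ n₂ r s p} := by
  rw [nablaPairCount, if_pos ⟨h₁, h₂, h₃⟩]; rfl

lemma npc_neg {n₁ n₂ s : ℤ} (h : ¬(0 ≤ n₁ ∧ 0 ≤ n₂ ∧ 0 ≤ s)) (r : ℕ) :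
    nablaPairCount n₁ n₂ r s = 0 := if_neg h

lemma ngood_finite (n₁ n₂ : ℤ) (r : ℕ) (s : ℤ) : {p | NGood n₁ n₂ r s p}.Finite := by
  have : {p : (Fin r → ℤ) × (Fin r → ℤ) | NGood n₁ n₂ r s p} ⊆
      (Set.pi Set.univ fun _ : Fin r => Set.Icc (1:ℤ) n₁) ×ˢ
      (Set.pi Set.univ fun _ : Fin r => Set.Icc (1:ℤ) n₂) := by
    rintro ⟨u, v⟩ ⟨h1, _, h3, h4, _, h6, _⟩
    exact ⟨fun i _ => ⟨h1 i, h3 i⟩, fun i _ => ⟨h4 i, h6 i⟩⟩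
  exact Set.Finite.subset
    ((Set.Finite.pi fun _ => Set.finite_Icc _ _).prod (Set.Finite.pi fun _ => Set.finite_Icc _ _)) this

lemma snoc_strictMono {m : ℕ} {q : Fin m → ℤ} (hq : StrictMono q) {a : ℤ}
    (hqa : ∀ i, q i ≤ a - 1) : StrictMono (Fin.snoc q a) := by
  intro i j hij
  rcases Fin.eq_castSucc_or_eq_last j with ⟨j', rfl⟩ | rfl
  · have hi : i < Fin.last m := lt_of_lt_of_le hij (Fin.castSucc_lt_last j').le
    obtain ⟨i', rfl⟩ := Fin.exists_castSucc_eq.mpr hi.ne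
    simp only [Fin.snoc_castSucc]
    exact hq (by exact_mod_cast hij)
  · obtain ⟨i', rfl⟩ := Fin.exists_castSucc_eq.mpr (Fin.lt_last_iff_ne_last.mp hij)
    simp only [Fin.snoc_castSucc, Fin.snoc_last]
    exact lt_of_le_of_lt (hqa i') (by omega)

lemma fiber_card (n₁ n₂ s : ℤ) (m : ℕ) {a b : ℤ} (ha : 1 ≤ a) (ha' : a ≤ n₁)
    (hb : 1 ≤ b) (hb' : b ≤ n₂) :
    Nat.card {p : (Fin (m+1) → ℤ) × (Fin (m+1) → ℤ) //
      NGood n₁ n₂ (m+1) s p ∧ p.1 (Fin.last m) = a ∧ p.2 (Fin.last m) = b}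
    = nablaPairCount (a-1) (b-1) m (s - |a-b|) := by
  by_cases hsab : 0 ≤ s - |a - b|
  · rw [npc_pos (by omega) (by omega) hsab]
    refine Nat.card_congr ?_
    refine
      { toFun := fun p => ⟨(Fin.init p.1.1, Fin.init p.1.2), ?_⟩
        invFun := fun q => ⟨(Fin.snoc q.1.1 a, Fin.snoc q.1.2 b), ?_⟩
        left_inv := ?_, right_inv := ?_ }
    · obtain ⟨⟨h1, h2, h3, h4, h5, h6, h7⟩, hta, htb⟩ := p.2
      refine ⟨fun i => h1 _, h2.comp Fin.strictMono_castSucc, fun i => ?_,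
        fun i => h4 _, h5.comp Fin.strictMono_castSucc, fun i => ?_, ?_⟩
      · have := h2 (Fin.castSucc_lt_last i); rw [hta] at this
        simpa [Fin.init] using by omega
      · have := h5 (Fin.castSucc_lt_last i); rw [htb] at this
        simpa [Fin.init] using by omega
      · have := h7
        rw [Fin.sum_univ_castSucc, hta, htb] at this
        simp only [Fin.init]; omega
    · obtain ⟨qp, h1, h2, h3, h4, h5, h6, h7⟩ := q
      refine ⟨⟨?_, snoc_strictMono h2 h3, ?_, ?_, snoc_strictMono h5 h6, ?_, ?_⟩,
        by simp, by simp⟩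
      · intro i
        rcases Fin.eq_castSucc_or_eq_last i with ⟨i', rfl⟩ | rfl <;> simp [h1, ha]
      · intro i
        rcases Fin.eq_castSucc_or_eq_last i with ⟨i', rfl⟩ | rfl <;>
          simp [ha'] <;> linarith [h3 i']
      · intro i
        rcases Fin.eq_castSucc_or_eq_last i with ⟨i', rfl⟩ | rfl <;> simp [h4, hb]
      · intro i
        rcases Fin.eq_castSucc_or_eq_last i with ⟨i', rfl⟩ | rfl <;>
          simp [hb'] <;> linarith [h6 i']
      · rw [Fin.sum_univ_castSucc]
        simp only [Fin.snoc_castSucc, Fin.snoc_last]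
        omega
    · rintro ⟨⟨u, v⟩, ⟨hg, hta, htb⟩⟩
      simp only [Subtype.mk.injEq, Prod.mk.injEq]
      constructor <;> [rw [← hta]; rw [← htb]] <;> exact Fin.snoc_init_self _
    · rintro ⟨⟨u, v⟩, hq⟩
      simp [Fin.init_snoc]
  · rw [npc_neg (by omega)]
    rw [Nat.card_eq_zero]
    left
    rw [isEmpty_subtype]
    rintro p ⟨⟨h1, h2, h3, h4, h5, h6, h7⟩, hta, htb⟩
    have : |p.1 (Fin.last m) - p.2 (Fin.last m)| ≤ ∑ i, |p.1 i - p.2 i| :=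
      Finset.single_le_sum (f := fun i => |p.1 i - p.2 i|) (fun i _ => abs_nonneg _)
        (Finset.mem_univ _)
    rw [hta, htb, h7] at this
    omega

lemma card_decomp (n₁ n₂ s : ℤ) (m : ℕ) :
    Nat.card {p // NGood n₁ n₂ (m+1) s p} =
      ∑ ab ∈ Finset.Icc 1 n₁ ×ˢ Finset.Icc 1 n₂,
        nablaPairCount (ab.1 - 1) (ab.2 - 1) m (s - |ab.1 - ab.2|) := by
  classical
  have hfin := ngood_finite n₁ n₂ (m+1) s
  show Nat.card {p | NGood n₁ n₂ (m+1) s p} = _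
  rw [Nat.card_eq_card_finite_toFinset hfin]
  rw [Finset.card_eq_sum_card_fiberwise
    (f := fun p => (p.1 (Fin.last m), p.2 (Fin.last m)))
    (t := Finset.Icc 1 n₁ ×ˢ Finset.Icc 1 n₂) ?_]
  · refine Finset.sum_congr rfl fun ab hab => ?_
    simp only [Finset.mem_product, Finset.mem_Icc] at hab
    rw [← fiber_card n₁ n₂ s m hab.1.1 hab.1.2 hab.2.1 hab.2.2, ← Nat.card_eq_finsetCard]
    exact Nat.card_congr (Equiv.subtypeEquivRight fun p => by
      simp [Finset.mem_filter, hfin.mem_toFinset, Prod.ext_iff, and_assoc,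
        Set.mem_setOf_eq]).symm
  · intro p hp
    rw [Finset.mem_coe, hfin.mem_toFinset] at hp
    obtain ⟨h1, _, h3, h4, _, h6, _⟩ := hp
    simp only [Finset.mem_coe, Finset.mem_product, Finset.mem_Icc]
    exact ⟨⟨h1 _, h3 _⟩, ⟨h4 _, h6 _⟩⟩

lemma npc_zero' {n₁ n₂ s : ℤ} (h : n₁ < 0 ∨ n₂ < 0 ∨ s < 0) (r : ℕ) :
    nablaPairCount n₁ n₂ r s = 0 := if_neg (by omega)

lemma tsum_diag (n₁ n₂ s : ℤ) (hn₁ : 0 ≤ n₁) (hn₂ : 0 ≤ n₂) (m : ℕ) :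
    (∑' i : ℕ, nablaPairCount (n₁ - ((i : ℤ) + 1)) (n₂ - ((i : ℤ) + 1)) m (s - |n₂ - n₁|))
    = ∑ ab ∈ (Finset.Icc 1 n₁ ×ˢ Finset.Icc 1 n₂).filter
        (fun ab => n₁ - ab.1 = n₂ - ab.2),
        nablaPairCount (ab.1 - 1) (ab.2 - 1) m (s - |ab.1 - ab.2|) := by
  rw [tsum_eq_sum (s := Finset.range (min n₁ n₂).toNat)
    (fun i hi => npc_zero' (by simp only [Finset.mem_range] at hi; omega) m)]
  refine Finset.sum_nbij' (fun i => (n₁ - i, n₂ - i))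
    (fun ab => (n₁ - ab.1).toNat) ?_ ?_ ?_ ?_ ?_
  · intro i hi
    simp only [Finset.mem_range] at hi
    simp only [Finset.mem_filter, Finset.mem_product, Finset.mem_Icc]
    omega
  · intro ab hab
    simp only [Finset.mem_filter, Finset.mem_product, Finset.mem_Icc] at hab
    simp only [Finset.mem_range]
    omega
  · intro i hi
    show (n₁ - (n₁ - (i:ℤ))).toNat = i
    omega
  · intro ab hab
    simp only [Finset.mem_filter, Finset.mem_product, Finset.mem_Icc] at hab
    show (n₁ - ((n₁ - ab.1).toNat : ℤ), n₂ - ((n₁ - ab.1).toNat : ℤ)) = ab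
    have : ((n₁ - ab.1).toNat : ℤ) = n₁ - ab.1 := by omega
    rw [this, Prod.ext_iff]
    constructor <;> [skip; skip] <;> simp <;> omega
  · intro i hi
    have e1 : n₁ - ((i : ℤ) + 1) = (n₁ - i) - 1 := by ring
    have e2 : n₂ - ((i : ℤ) + 1) = (n₂ - i) - 1 := by ring
    have e3 : |n₂ - n₁| = |(n₁ - (i:ℤ)) - (n₂ - i)| := by
      rw [show (n₁ - (i:ℤ)) - (n₂ - i) = n₁ - n₂ by ring, abs_sub_comm]
    rw [e1, e2, e3]

lemma tsum_plus (n₁ n₂ s : ℤ) (hn₁ : 0 ≤ n₁) (hn₂ : 0 ≤ n₂) (m : ℕ) :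
    (∑' i : ℕ, ∑' j : ℕ,
      nablaPairCount (n₁ - ((i : ℤ) + 1)) (n₂ - ((i : ℤ) + 1) - ((j : ℤ) + 1)) m
        (s - |n₁ - n₂ + ((j : ℤ) + 1)|))
    = ∑ ab ∈ (Finset.Icc 1 n₁ ×ˢ Finset.Icc 1 n₂).filter
        (fun ab => n₁ - ab.1 < n₂ - ab.2),
        nablaPairCount (ab.1 - 1) (ab.2 - 1) m (s - |ab.1 - ab.2|) := by
  have hinner : ∀ i : ℕ,
      (∑' j : ℕ, nablaPairCount (n₁ - ((i : ℤ) + 1)) (n₂ - ((i : ℤ) + 1) - ((j : ℤ) + 1)) m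
        (s - |n₁ - n₂ + ((j : ℤ) + 1)|))
      = ∑ j ∈ Finset.range n₂.toNat,
          nablaPairCount (n₁ - ((i : ℤ) + 1)) (n₂ - ((i : ℤ) + 1) - ((j : ℤ) + 1)) m
            (s - |n₁ - n₂ + ((j : ℤ) + 1)|) := by
    intro i
    refine tsum_eq_sum fun j hj => npc_zero' ?_ m
    simp only [Finset.mem_range] at hj
    omega
  simp only [hinner]
  rw [tsum_eq_sum (s := Finset.range n₁.toNat) (fun i hi => Finset.sum_eq_zero fun j _ =>
    npc_zero' (by simp only [Finset.mem_range] at hi; omega) m)]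
  rw [← Finset.sum_product']
  rw [← Finset.sum_filter_of_ne (p := fun ij : ℕ × ℕ =>
    ((ij.1:ℤ) + 1 ≤ n₁ ∧ (ij.1:ℤ) + (ij.2:ℤ) + 2 ≤ n₂))
    (fun ij _ hne => by
      by_contra hc
      exact hne (npc_zero' (by omega) m))]
  refine Finset.sum_nbij' (fun ij => (n₁ - ij.1, n₂ - ij.1 - ij.2 - 1))
    (fun ab => ((n₁ - ab.1).toNat, (n₂ - ab.2 - (n₁ - ab.1) - 1).toNat)) ?_ ?_ ?_ ?_ ?_
  · intro ij hij
    simp only [Finset.mem_filter, Finset.mem_product, Finset.mem_range] at hij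
    simp only [Finset.mem_filter, Finset.mem_product, Finset.mem_Icc]
    omega
  · intro ab hab
    simp only [Finset.mem_filter, Finset.mem_product, Finset.mem_Icc] at hab
    simp only [Finset.mem_filter, Finset.mem_product, Finset.mem_range]
    omega
  · intro ij hij
    simp only [Finset.mem_filter, Finset.mem_product, Finset.mem_range] at hij
    show (((n₁ - (n₁ - (ij.1:ℤ))).toNat, ((n₂ - (n₂ - ij.1 - ij.2 - 1) - (n₁ - (n₁ - (ij.1:ℤ))) - 1)).toNat) : ℕ × ℕ) = ij
    rw [Prod.ext_iff]
    constructor <;> simp <;> omega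
  · intro ab hab
    simp only [Finset.mem_filter, Finset.mem_product, Finset.mem_Icc] at hab
    show ((n₁ - ((n₁ - ab.1).toNat : ℤ), n₂ - ((n₁ - ab.1).toNat : ℤ) - ((n₂ - ab.2 - (n₁ - ab.1) - 1).toNat : ℤ) - 1) : ℤ × ℤ) = ab
    rw [Prod.ext_iff]
    constructor <;> simp <;> omega
  · intro ij hij
    have e1 : n₁ - ((ij.1 : ℤ) + 1) = (n₁ - ij.1) - 1 := by ring
    have e2 : n₂ - ((ij.1 : ℤ) + 1) - ((ij.2 : ℤ) + 1) = (n₂ - ij.1 - ij.2 - 1) - 1 := by ring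
    have e3 : |n₁ - n₂ + ((ij.2 : ℤ) + 1)| = |(n₁ - (ij.1:ℤ)) - (n₂ - ij.1 - ij.2 - 1)| := by
      congr 1; ring
    rw [e1, e2, e3]

lemma tsum_minus (n₁ n₂ s : ℤ) (hn₁ : 0 ≤ n₁) (hn₂ : 0 ≤ n₂) (m : ℕ) :
    (∑' i : ℕ, ∑' j : ℕ,
      nablaPairCount (n₁ - ((i : ℤ) + 1) - ((j : ℤ) + 1)) (n₂ - ((i : ℤ) + 1)) m
        (s - |n₁ - n₂ - ((j : ℤ) + 1)|))
    = ∑ ab ∈ (Finset.Icc 1 n₁ ×ˢ Finset.Icc 1 n₂).filter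
        (fun ab => n₂ - ab.2 < n₁ - ab.1),
        nablaPairCount (ab.1 - 1) (ab.2 - 1) m (s - |ab.1 - ab.2|) := by
  have hinner : ∀ i : ℕ,
      (∑' j : ℕ, nablaPairCount (n₁ - ((i : ℤ) + 1) - ((j : ℤ) + 1)) (n₂ - ((i : ℤ) + 1)) m
        (s - |n₁ - n₂ - ((j : ℤ) + 1)|))
      = ∑ j ∈ Finset.range n₁.toNat,
          nablaPairCount (n₁ - ((i : ℤ) + 1) - ((j : ℤ) + 1)) (n₂ - ((i : ℤ) + 1)) m
            (s - |n₁ - n₂ - ((j : ℤ) + 1)|) := by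
    intro i
    refine tsum_eq_sum fun j hj => npc_zero' ?_ m
    simp only [Finset.mem_range] at hj
    omega
  simp only [hinner]
  rw [tsum_eq_sum (s := Finset.range n₂.toNat) (fun i hi => Finset.sum_eq_zero fun j _ =>
    npc_zero' (by simp only [Finset.mem_range] at hi; omega) m)]
  rw [← Finset.sum_product']
  rw [← Finset.sum_filter_of_ne (p := fun ij : ℕ × ℕ =>
    ((ij.1:ℤ) + 1 ≤ n₂ ∧ (ij.1:ℤ) + (ij.2:ℤ) + 2 ≤ n₁))
    (fun ij _ hne => by
      by_contra hc
      exact hne (npc_zero' (by omega) m))]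
  refine Finset.sum_nbij' (fun ij => (n₁ - ij.1 - ij.2 - 1, n₂ - ij.1))
    (fun ab => ((n₂ - ab.2).toNat, (n₁ - ab.1 - (n₂ - ab.2) - 1).toNat)) ?_ ?_ ?_ ?_ ?_
  · intro ij hij
    simp only [Finset.mem_filter, Finset.mem_product, Finset.mem_range] at hij
    simp only [Finset.mem_filter, Finset.mem_product, Finset.mem_Icc]
    omega
  · intro ab hab
    simp only [Finset.mem_filter, Finset.mem_product, Finset.mem_Icc] at hab
    simp only [Finset.mem_filter, Finset.mem_product, Finset.mem_range]
    omega
  · intro ij hij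
    simp only [Finset.mem_filter, Finset.mem_product, Finset.mem_range] at hij
    show (((n₂ - (n₂ - (ij.1:ℤ))).toNat, ((n₁ - (n₁ - ij.1 - ij.2 - 1) - (n₂ - (n₂ - (ij.1:ℤ))) - 1)).toNat) : ℕ × ℕ) = ij
    rw [Prod.ext_iff]
    constructor <;> simp <;> omega
  · intro ab hab
    simp only [Finset.mem_filter, Finset.mem_product, Finset.mem_Icc] at hab
    show ((n₁ - ((n₂ - ab.2).toNat : ℤ) - ((n₁ - ab.1 - (n₂ - ab.2) - 1).toNat : ℤ) - 1, n₂ - ((n₂ - ab.2).toNat : ℤ)) : ℤ × ℤ) = ab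
    rw [Prod.ext_iff]
    constructor <;> simp <;> omega
  · intro ij hij
    have e1 : n₁ - ((ij.1 : ℤ) + 1) - ((ij.2 : ℤ) + 1) = (n₁ - ij.1 - ij.2 - 1) - 1 := by ring
    have e2 : n₂ - ((ij.1 : ℤ) + 1) = (n₂ - ij.1) - 1 := by ring
    have e3 : |n₁ - n₂ - ((ij.2 : ℤ) + 1)| = |(n₁ - (ij.1:ℤ) - ij.2 - 1) - (n₂ - ij.1)| := by
      congr 1; ring
    rw [e1, e2, e3]


theorem stmt14 (n₁ n₂ s : ℤ) (hn₁ : 0 ≤ n₁) (hn₂ : 0 ≤ n₂) (hs : 0 ≤ s)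
    (r : ℕ) (hr : 1 ≤ r) :
    nablaPairCount n₁ n₂ r s
      = (∑' i : ℕ,
          nablaPairCount (n₁ - ((i : ℤ) + 1)) (n₂ - ((i : ℤ) + 1)) (r - 1)
            (s - |n₂ - n₁|))
      + (∑' i : ℕ, ∑' j : ℕ,
          nablaPairCount (n₁ - ((i : ℤ) + 1)) (n₂ - ((i : ℤ) + 1) - ((j : ℤ) + 1)) (r - 1)
            (s - |n₁ - n₂ + ((j : ℤ) + 1)|))
      + (∑' i : ℕ, ∑' j : ℕ,
          nablaPairCount (n₁ - ((i : ℤ) + 1) - ((j : ℤ) + 1)) (n₂ - ((i : ℤ) + 1)) (r - 1)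
            (s - |n₁ - n₂ - ((j : ℤ) + 1)|)) := by
  classical
  obtain ⟨m, rfl⟩ : ∃ m, r = m + 1 := ⟨r - 1, by omega⟩
  simp only [Nat.add_sub_cancel]
  rw [tsum_diag n₁ n₂ s hn₁ hn₂ m, tsum_plus n₁ n₂ s hn₁ hn₂ m, tsum_minus n₁ n₂ s hn₁ hn₂ m]
  rw [npc_pos hn₁ hn₂ hs, card_decomp n₁ n₂ s m]
  rw [← Finset.sum_filter_add_sum_filter_not (Finset.Icc 1 n₁ ×ˢ Finset.Icc 1 n₂)
    (fun ab => n₁ - ab.1 = n₂ - ab.2), add_assoc]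
  congr 1
  rw [← Finset.sum_filter_add_sum_filter_not
    ((Finset.Icc 1 n₁ ×ˢ Finset.Icc 1 n₂).filter (fun ab => ¬ (n₁ - ab.1 = n₂ - ab.2)))
    (fun ab => n₁ - ab.1 < n₂ - ab.2)]
  rw [Finset.filter_filter, Finset.filter_filter]
  congr 1
  · apply Finset.sum_congr _ fun _ _ => rfl
    apply Finset.filter_congr
    intro ab _
    constructor
    · rintro ⟨h1, h2⟩; exact h2
    · intro h; exact ⟨by omega, h⟩
  · apply Finset.sum_congr _ fun _ _ => rfl
    apply Finset.filter_congr
    intro ab _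
    constructor
    · rintro ⟨h1, h2⟩; omega
    · intro h; constructor <;> omega
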